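/- Let A be a commutative ring, M a finitely generated A-module, and Φ : M → M an A-linear endomorphism. If the induced endomorphism Φ_red of M/(nil(A)·M) over A/nil(A) is surjective, then Φ itself is surjective. -/
import Mathlib

/-- Let `A` be a commutative ring, `M` a finitely generated `A`-module,
and `Φ : M → M` an `A`-linear endomorphism. If the induced endomorphism `Φ_red` of
`M/(nil(A)·M)` is surjective, then `Φ` itself is surjective.
Here the induced map is `Submodule.mapQ` of `Φ` on the quotient `M ⧸ nil(A) • M`. -/
theorem surjective_of_reduction_surjective
    {A M : Type*} [CommRing A] [AddCommGroup M] [Module A M] [Module.Finite A M]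
    (Φ : M →ₗ[A] M)
    (hred : Function.Surjective
      (Submodule.mapQ ((nilradical A) • (⊤ : Submodule A M))
        ((nilradical A) • (⊤ : Submodule A M)) Φ
        (Submodule.map_le_iff_le_comap.mp
          ((Submodule.map_smul'' (nilradical A) (⊤ : Submodule A M) Φ).le.trans
            (smul_mono_right (nilradical A) le_top))))) :
    Function.Surjective Φ := by
  set N : Submodule A M := (nilradical A) • (⊤ : Submodule A M)
  have hjac : nilradical A ≤ Ideal.jacobson (⊥ : Ideal A) := by
    apply le_sInf
    rintro J ⟨-, hJ⟩
    exact nilradical_le_prime J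
  have hle : (⊤ : Submodule A M) ≤ LinearMap.range Φ ⊔ N := by
    intro m _
    obtain ⟨x, hx⟩ := hred (Submodule.Quotient.mk m)
    obtain ⟨y, rfl⟩ := Submodule.Quotient.mk_surjective _ x
    rw [Submodule.mapQ_apply, Submodule.Quotient.eq] at hx
    have : m = Φ y + -(Φ y - m) := by abel
    rw [this]
    exact Submodule.add_mem_sup (LinearMap.mem_range_self Φ y) (neg_mem hx)
  have := Submodule.le_of_le_smul_of_le_jacobson_bot (N' := ⊤)
    (N := LinearMap.range Φ) Module.Finite.fg_top hjac hle
  rw [← LinearMap.range_eq_top]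
  exact top_le_iff.mp this
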